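/- Let f : ℝ → ℝ be a function of bounded variation on [0,1] with total variation V = V(f; [0,1]) finite, and suppose f is Lebesgue integrable on [0,1]. For each n ≥ 1, consider the uniform partition of [0,1] into n equal subintervals [(i−1)/n, i/n], i = 1, ..., n. Then 0 ≤ Σ_{i=1}^n (sup_{x ∈ [(i−1)/n, i/n]} f(x)) · (1/n) − ∫_0^1 f(x) dx ≤ V/n. In particular, the simple fuzzy measure over the uniform partition converges to the fuzzy measure at rate O(1/n) for membership functions of bounded variation. -/

import Mathlib

open MeasureTheory

/-- For `f : ℝ → ℝ` of bounded variation on `[0,1]` (with total variation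
`V = V(f; [0,1])` finite) and Lebesgue integrable on `[0,1]`, for the uniform partition of
`[0,1]` into `n ≥ 1` equal subintervals, the upper Darboux sum (simple fuzzy measure)
over-estimates the integral (fuzzy measure) by at most `V / n`. -/
theorem bounded_variation_upper_darboux_rate
    (f : ℝ → ℝ) (hbv : BoundedVariationOn f (Set.Icc (0 : ℝ) 1))
    (hint : IntervalIntegrable f volume 0 1)
    (n : ℕ) (hn : 1 ≤ n) :
    0 ≤ (∑ i ∈ Finset.range n,
          sSup (f '' Set.Icc ((i : ℝ) / n) (((i : ℝ) + 1) / n)) * (1 / n))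
        - ∫ t in (0 : ℝ)..1, f t ∧
    (∑ i ∈ Finset.range n,
          sSup (f '' Set.Icc ((i : ℝ) / n) (((i : ℝ) + 1) / n)) * (1 / n))
        - ∫ t in (0 : ℝ)..1, f t ≤ (eVariationOn f (Set.Icc (0 : ℝ) 1)).toReal / n := by
  have hn0 : (0 : ℝ) < n := by exact_mod_cast hn
  set a : ℕ → ℝ := fun i => (i : ℝ) / n with ha
  have ha_mono : ∀ i : ℕ, a i ≤ a (i + 1) := by
    intro i
    simp only [ha]
    gcongr
    exact_mod_cast Nat.le_succ i
  have hlen : ∀ i : ℕ, a (i + 1) - a i = 1 / n := by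
    intro i
    simp only [ha]
    push_cast
    field_simp
    ring
  -- each subinterval is contained in [0,1]
  have hsub : ∀ i : ℕ, i < n → Set.Icc (a i) (a (i + 1)) ⊆ Set.Icc (0 : ℝ) 1 := by
    intro i hi
    apply Set.Icc_subset_Icc
    · positivity
    · rw [div_le_one hn0]
      push_cast
      exact_mod_cast Nat.succ_le_of_lt hi
  -- rewrite the sup sets
  have hcast : ∀ i : ℕ, ((i : ℝ) + 1) / n = a (i + 1) := by
    intro i; simp only [ha]; push_cast; ring
  -- integrability on subintervals
  have hint' : ∀ i : ℕ, i < n → IntervalIntegrable f volume (a i) (a (i + 1)) := by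
    intro i hi
    apply hint.mono_set
    rw [Set.uIcc_of_le (ha_mono i), Set.uIcc_of_le (by norm_num : (0:ℝ) ≤ 1)]
    exact hsub i hi
  -- subinterval variations
  set Vi : ℕ → ENNReal := fun i => eVariationOn f (Set.Icc (a i) (a (i + 1))) with hVi
  have hVile : ∀ i : ℕ, i < n → Vi i ≤ eVariationOn f (Set.Icc (0 : ℝ) 1) := fun i hi =>
    eVariationOn.mono f (hsub i hi)
  have hVilt : ∀ i : ℕ, i < n → Vi i ≠ ⊤ := fun i hi =>
    lt_of_le_of_lt (hVile i hi) (lt_top_iff_ne_top.mpr hbv) |>.ne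
  -- pointwise bounds on subintervals
  have hbdd : ∀ i : ℕ, i < n → BddAbove (f '' Set.Icc (a i) (a (i + 1))) := by
    intro i hi
    refine ⟨f (a i) + (Vi i).toReal, ?_⟩
    rintro _ ⟨x, hx, rfl⟩
    have h1 : dist (f x) (f (a i)) ≤ (Vi i).toReal := by
      rw [dist_edist]
      refine ENNReal.toReal_mono (hVilt i hi) ?_
      exact eVariationOn.edist_le f hx (Set.left_mem_Icc.mpr (ha_mono i))
    have := le_of_abs_le (by rwa [Real.dist_eq] at h1)
    linarith
  have hne : ∀ i : ℕ, (f '' Set.Icc (a i) (a (i + 1))).Nonempty := by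
    intro i
    exact ⟨f (a i), Set.mem_image_of_mem f (Set.left_mem_Icc.mpr (ha_mono i))⟩
  have hfle : ∀ i : ℕ, i < n → ∀ x ∈ Set.Icc (a i) (a (i + 1)),
      f x ≤ sSup (f '' Set.Icc (a i) (a (i + 1))) := by
    intro i hi x hx
    exact le_csSup (hbdd i hi) (Set.mem_image_of_mem f hx)
  have hsup_le : ∀ i : ℕ, i < n → ∀ x ∈ Set.Icc (a i) (a (i + 1)),
      sSup (f '' Set.Icc (a i) (a (i + 1))) ≤ f x + (Vi i).toReal := by
    intro i hi x hx
    apply csSup_le (hne i)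
    rintro _ ⟨y, hy, rfl⟩
    have h1 : dist (f y) (f x) ≤ (Vi i).toReal := by
      rw [dist_edist]
      exact ENNReal.toReal_mono (hVilt i hi) (eVariationOn.edist_le f hy hx)
    have := le_of_abs_le (by rwa [Real.dist_eq] at h1)
    linarith
  -- integral comparison on each subinterval
  have hIle : ∀ i : ℕ, i < n →
      (∫ t in a i..a (i + 1), f t) ≤ sSup (f '' Set.Icc (a i) (a (i + 1))) * (1 / n) := by
    intro i hi
    have := intervalIntegral.integral_mono_on (μ := volume) (ha_mono i) (hint' i hi)
      (intervalIntegrable_const) (hfle i hi)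
    rwa [intervalIntegral.integral_const, smul_eq_mul, hlen i,
      mul_comm] at this
  have hIge : ∀ i : ℕ, i < n →
      sSup (f '' Set.Icc (a i) (a (i + 1))) * (1 / n) - (Vi i).toReal * (1 / n)
        ≤ ∫ t in a i..a (i + 1), f t := by
    intro i hi
    have hpt : ∀ x ∈ Set.Icc (a i) (a (i + 1)),
        sSup (f '' Set.Icc (a i) (a (i + 1))) - (Vi i).toReal ≤ f x := by
      intro x hx
      linarith [hsup_le i hi x hx]
    have := intervalIntegral.integral_mono_on (μ := volume) (ha_mono i)
      (intervalIntegrable_const) (hint' i hi) hpt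
    rw [intervalIntegral.integral_const, smul_eq_mul, hlen i, mul_comm] at this
    linarith [this]
  -- split the integral
  have hsplit : (∑ i ∈ Finset.range n, ∫ t in a i..a (i + 1), f t) = ∫ t in (0 : ℝ)..1, f t := by
    have := intervalIntegral.sum_integral_adjacent_intervals (μ := volume) (a := a) (n := n)
      (fun k hk => hint' k hk)
    rw [this]
    norm_num [ha, div_self hn0.ne']
  -- telescoping sum of variations
  have htel : ∀ k : ℕ, k ≤ n →
      (∑ i ∈ Finset.range k, Vi i) = eVariationOn f (Set.Icc 0 (a k)) := by
    intro k hk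
    induction k with
    | zero =>
      have h0 : a 0 = 0 := by simp [ha]
      simp only [Finset.range_zero, Finset.sum_empty, h0, Set.Icc_self]
      exact (eVariationOn.subsingleton f Set.subsingleton_singleton).symm
    | succ k ih =>
      rw [Finset.sum_range_succ, ih (Nat.le_of_succ_le hk)]
      have h0k : (0 : ℝ) ≤ a k := by positivity
      have := eVariationOn.Icc_add_Icc f (s := Set.univ) h0k (ha_mono k) (Set.mem_univ _)
      simpa only [Set.univ_inter] using this
  have hVsum : (∑ i ∈ Finset.range n, (Vi i).toReal)
      = (eVariationOn f (Set.Icc (0 : ℝ) 1)).toReal := by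
    rw [← ENNReal.toReal_sum (fun i hi => hVilt i (Finset.mem_range.mp hi)),
      htel n le_rfl]
    congr 2
    simp [ha, div_self hn0.ne']
  -- now assemble
  have hsum_rw : (∑ i ∈ Finset.range n,
      sSup (f '' Set.Icc ((i : ℝ) / n) (((i : ℝ) + 1) / n)) * (1 / n))
      = ∑ i ∈ Finset.range n, sSup (f '' Set.Icc (a i) (a (i + 1))) * (1 / n) := by
    apply Finset.sum_congr rfl
    intro i _
    rw [hcast i]
  rw [hsum_rw, ← hsplit, ← Finset.sum_sub_distrib]
  constructor
  · apply Finset.sum_nonneg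
    intro i hi
    have := hIle i (Finset.mem_range.mp hi)
    linarith
  · calc (∑ i ∈ Finset.range n,
        (sSup (f '' Set.Icc (a i) (a (i + 1))) * (1 / n) - ∫ t in a i..a (i + 1), f t))
        ≤ ∑ i ∈ Finset.range n, (Vi i).toReal * (1 / n) := by
          apply Finset.sum_le_sum
          intro i hi
          have := hIge i (Finset.mem_range.mp hi)
          linarith
      _ = (eVariationOn f (Set.Icc (0 : ℝ) 1)).toReal / n := by
          rw [← Finset.sum_mul, hVsum]
          ring
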